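/- Let n ≥ 2, fix a natural code ε = (ε₁,…,εₙ) : ℝⁿ → ℕⁿ, and let T ⊆ ℝⁿ determine a cube tiling of ℝⁿ. For k ∈ ℕ set Tᵏ = {t ∈ T : εₙ(tₙ) = k}. Then the projection {(t₁,…,t_{n−1}) : t ∈ Tᵏ} of Tᵏ onto the first n−1 coordinates determines a cube tiling of ℝⁿ⁻¹. -/

import Mathlib

/-- The half-open unit cube `[0,1)ⁿ` translated by `t`. -/
def Cube {n : ℕ} (t : Fin n → ℝ) : Set (Fin n → ℝ) :=
  {x | ∀ j, t j ≤ x j ∧ x j < t j + 1}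

/-- `T` determines a cube tiling of `ℝⁿ`: the cubes `[0,1)ⁿ + t`, `t ∈ T`,
are pairwise disjoint and their union is all of `ℝⁿ`. -/
def IsCubeTiling {n : ℕ} (T : Set (Fin n → ℝ)) : Prop :=
  (∀ s ∈ T, ∀ t ∈ T, s ≠ t → Disjoint (Cube s) (Cube t)) ∧
  (⋃ t ∈ T, Cube t) = Set.univ

/-- `T ⊆ ℝ` determines a tiling of `ℝ` by unit intervals `[0,1) + t`. -/
def IsCubeTiling1 (T : Set ℝ) : Prop :=
  (∀ s ∈ T, ∀ t ∈ T, s ≠ t → Disjoint (Set.Ico s (s + 1)) (Set.Ico t (t + 1))) ∧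
  (⋃ t ∈ T, Set.Ico t (t + 1)) = Set.univ

/-- The tiling determined by `T` contains a column: there are `s ∈ ℝⁿ` and a
standard basis vector `eᵢ` such that `s + k·eᵢ ∈ T` for every `k ∈ ℤ`. -/
def ContainsColumn {n : ℕ} (T : Set (Fin n → ℝ)) : Prop :=
  ∃ s : Fin n → ℝ, ∃ i : Fin n, ∀ k : ℤ, (s + (k : ℝ) • (Pi.single i 1 : Fin n → ℝ)) ∈ T

/-- A natural code of `ℝⁿ`: each `ε j : ℝ → ℕ⁺` restricts to a bijection from
every coset `x + ℤ` onto the positive integers. -/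
def IsNaturalCode {n : ℕ} (ε : Fin n → ℝ → ℕ+) : Prop :=
  ∀ j : Fin n, ∀ x : ℝ, Set.BijOn (ε j) {y : ℝ | ∃ m : ℤ, y = x + m} Set.univ

lemma snoc_mem_cube {n : ℕ} (t : Fin (n + 1) → ℝ) (x : Fin n → ℝ) (y : ℝ) :
    Fin.snoc x y ∈ Cube t ↔
      x ∈ Cube (Fin.init t) ∧ (t (Fin.last n) ≤ y ∧ y < t (Fin.last n) + 1) := by
  constructor
  · intro h
    refine ⟨fun j => ?_, ?_⟩
    · have := h j.castSucc
      simpa [Fin.init] using this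
    · simpa using h (Fin.last n)
  · rintro ⟨h1, h2⟩ j
    induction j using Fin.lastCases with
    | last => simpa using h2
    | cast i =>
      have := h1 i
      simpa [Fin.init] using this

/-- The key lemma: for every `x ∈ ℝⁿ` there is a unique cube of the slice `Tᵏ`
whose projection contains `x`. -/
lemma key_lemma {n : ℕ} (ε : Fin (n + 1) → ℝ → ℕ+) (hε : IsNaturalCode ε)
    (T : Set (Fin (n + 1) → ℝ)) (hT : IsCubeTiling T) (k : ℕ+) (x : Fin n → ℝ) :
    ∃! t, t ∈ T ∧ ε (Fin.last n) (t (Fin.last n)) = k ∧ x ∈ Cube (Fin.init t) := by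
  -- every point lies in exactly one cube of T
  have cover : ∀ p : Fin (n + 1) → ℝ, ∃ t ∈ T, p ∈ Cube t := by
    intro p
    have : p ∈ ⋃ t ∈ T, Cube t := hT.2 ▸ Set.mem_univ p
    simpa using Set.mem_iUnion₂.mp this
  have ptuniq : ∀ p : Fin (n + 1) → ℝ, ∀ t ∈ T, ∀ t' ∈ T,
      p ∈ Cube t → p ∈ Cube t' → t = t' := by
    intro p t ht t' ht' hp hp'
    by_contra hne
    exact (hT.1 t ht t' ht' hne).ne_of_mem hp hp' rfl
  -- the set of last coordinates of cubes whose projections contain x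
  set S : Set ℝ := {c : ℝ | ∃ t ∈ T, x ∈ Cube (Fin.init t) ∧ t (Fin.last n) = c} with hS
  have Scover : ∀ y : ℝ, ∃ c ∈ S, c ≤ y ∧ y < c + 1 := by
    intro y
    obtain ⟨t, ht, hmem⟩ := cover (Fin.snoc x y)
    rw [snoc_mem_cube] at hmem
    exact ⟨t (Fin.last n), ⟨t, ht, hmem.1, rfl⟩, hmem.2⟩
  have Ssep : ∀ c ∈ S, ∀ c' ∈ S, |c - c'| < 1 → c = c' := by
    rintro c ⟨t, ht, hxt, rfl⟩ c' ⟨t', ht', hxt', rfl⟩ habs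
    rw [abs_lt] at habs
    set y := max (t (Fin.last n)) (t' (Fin.last n)) with hy
    have hmem : Fin.snoc x y ∈ Cube t := by
      rw [snoc_mem_cube]
      exact ⟨hxt, le_max_left _ _, by rcases max_cases (t (Fin.last n)) (t' (Fin.last n)) with ⟨h, _⟩ | ⟨h, _⟩ <;> rw [hy, h] <;> linarith⟩
    have hmem' : Fin.snoc x y ∈ Cube t' := by
      rw [snoc_mem_cube]
      exact ⟨hxt', le_max_right _ _, by rcases max_cases (t (Fin.last n)) (t' (Fin.last n)) with ⟨h, _⟩ | ⟨h, _⟩ <;> rw [hy, h] <;> linarith⟩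
    rw [ptuniq _ t ht t' ht' hmem hmem']
  have Ssucc : ∀ c ∈ S, c + 1 ∈ S := by
    intro c hc
    obtain ⟨d, hd, hle, hlt⟩ := Scover (c + 1)
    have hcd : c < d := by linarith
    have h1 : (1:ℝ) ≤ d - c := by
      by_contra h
      push_neg at h
      have : |d - c| < 1 := abs_lt.mpr ⟨by linarith, by linarith⟩
      have := Ssep d hd c hc this
      linarith
    have : d = c + 1 := by linarith
    exact this ▸ hd
  have Spred : ∀ c ∈ S, c - 1 ∈ S := by
    intro c hc
    obtain ⟨d, hd, hle, hlt⟩ := Scover (c - 1/2)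
    have hne : (1:ℝ) ≤ c - d := by
      by_contra h
      push_neg at h
      have : |c - d| < 1 := abs_lt.mpr ⟨by linarith, by linarith⟩
      have := Ssep c hc d hd this
      linarith
    have hd1 : d + 1 ∈ S := Ssucc d hd
    have : d + 1 = c := Ssep (d + 1) hd1 c hc (abs_lt.mpr ⟨by linarith, by linarith⟩)
    have : d = c - 1 := by linarith
    exact this ▸ hd
  have Sadd : ∀ c ∈ S, ∀ m : ℤ, c + m ∈ S := by
    intro c hc m
    induction m using Int.induction_on with
    | zero => simpa using hc
    | succ i ih =>
      have := Ssucc _ ih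
      have he : c + ((i : ℝ) + 1) = c + (i : ℝ) + 1 := by ring
      push_cast
      rw [he]
      exact this
    | pred i ih =>
      have := Spred _ ih
      have heq : c + ((-(i : ℤ) - 1 : ℤ) : ℝ) = c + ((-(i : ℤ) : ℤ) : ℝ) - 1 := by
        push_cast; ring
      rw [heq]
      exact this
  -- any element of S lies in the coset of any other element
  obtain ⟨s, hsS, _, _⟩ := Scover 0
  have Scoset : ∀ c ∈ S, ∃ m : ℤ, c = s + m := by
    intro c hc
    set m := ⌊c - s⌋ with hm
    have h1 : (m : ℝ) ≤ c - s := Int.floor_le _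
    have h2 : c - s < m + 1 := Int.lt_floor_add_one _
    have hsm : s + (m : ℝ) ∈ S := Sadd s hsS m
    have := Ssep c hc (s + m) hsm (abs_lt.mpr ⟨by linarith, by linarith⟩)
    exact ⟨m, this⟩
  have hbij := hε (Fin.last n) s
  -- existence
  obtain ⟨c, hcC, hck⟩ := hbij.surjOn (Set.mem_univ k)
  obtain ⟨m, hm⟩ := hcC
  have hcS : c ∈ S := hm ▸ Sadd s hsS m
  obtain ⟨t, ht, hxt, htc⟩ := hcS
  refine ⟨t, ⟨ht, by rw [htc]; exact hck, hxt⟩, ?_⟩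
  -- uniqueness
  rintro t' ⟨ht', hk', hxt'⟩
  have hc'S : t' (Fin.last n) ∈ S := ⟨t', ht', hxt', rfl⟩
  obtain ⟨m', hm'⟩ := Scoset _ hc'S
  have hcC' : t' (Fin.last n) ∈ {y : ℝ | ∃ m : ℤ, y = s + m} := ⟨m', hm'⟩
  have hcC2 : t (Fin.last n) ∈ {y : ℝ | ∃ m : ℤ, y = s + m} := htc ▸ ⟨m, hm⟩
  have heq : t' (Fin.last n) = t (Fin.last n) := by
    apply hbij.injOn hcC' hcC2
    rw [hk', htc, hck]
  -- both cubes contain the point (x, t' last)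
  have hmem : Fin.snoc x (t' (Fin.last n)) ∈ Cube t' := by
    rw [snoc_mem_cube]
    exact ⟨hxt', le_refl _, by linarith⟩
  have hmem2 : Fin.snoc x (t' (Fin.last n)) ∈ Cube t := by
    rw [snoc_mem_cube, heq]
    exact ⟨hxt, le_refl _, by linarith⟩
  exact ptuniq _ t' ht' t ht hmem hmem2

/-- For a cube tiling of `ℝⁿ` (`n ≥ 2`) with a natural code, the projection of
`Tᵏ = {t ∈ T : εₙ(tₙ) = k}` onto the first `n − 1` coordinates determines a
cube tiling of `ℝⁿ⁻¹`. -/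
theorem projection_of_code_slice_tiling {n : ℕ} (hn : 1 ≤ n)
    (ε : Fin (n + 1) → ℝ → ℕ+) (hε : IsNaturalCode ε)
    (T : Set (Fin (n + 1) → ℝ)) (hT : IsCubeTiling T) (k : ℕ+) :
    IsCubeTiling
      ((fun t : Fin (n + 1) → ℝ => Fin.init t) ''
        {t ∈ T | ε (Fin.last n) (t (Fin.last n)) = k}) := by
  constructor
  · rintro u ⟨t, ⟨ht, hk⟩, rfl⟩ v ⟨t', ⟨ht', hk'⟩, rfl⟩ hne
    rw [Set.disjoint_left]
    intro x hx hx'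
    obtain ⟨w, _, huniq⟩ := key_lemma ε hε T hT k x
    have h1 : t = w := (huniq t ⟨ht, hk, hx⟩).symm ▸ rfl
    have h2 : t' = w := (huniq t' ⟨ht', hk', hx'⟩).symm ▸ rfl
    · exact hne (by rw [huniq t ⟨ht, hk, hx⟩, huniq t' ⟨ht', hk', hx'⟩])
  · rw [Set.eq_univ_iff_forall]
    intro x
    obtain ⟨t, ⟨ht, hk, hx⟩, _⟩ := key_lemma ε hε T hT k x
    exact Set.mem_iUnion₂.mpr
      ⟨Fin.init t, Set.mem_image_of_mem _ (⟨ht, hk⟩ : t ∈ {t ∈ T | _}), hx⟩
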